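/- For every nonzero complex number z, det M(z) = ((-1)^{nm} / (-z)^m) · det(T - z I_{2m}) · det(B_1 ⋯ B_n). -/

import Mathlib

open Matrix

/-- The transfer matrix `T(k) = E_k ⋯ E_1` where
`E_i = [[-B_i⁻¹ A_i, -B_i⁻¹ C_{i-1}], [I_m, 0]]`. -/
noncomputable def transfer (m : ℕ) (A B C : ℕ → Matrix (Fin m) (Fin m) ℂ) :
    ℕ → Matrix (Fin m ⊕ Fin m) (Fin m ⊕ Fin m) ℂ
  | 0 => 1
  | k + 1 =>
      Matrix.fromBlocks (-(B (k + 1))⁻¹ * A (k + 1)) (-(B (k + 1))⁻¹ * C k) 1 0 *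
        transfer m A B C k

/-- The `nm × nm` block tridiagonal matrix `M(z)` with diagonal blocks `A_1, …, A_n`,
superdiagonal blocks `B_1, …, B_{n-1}`, subdiagonal blocks `C_1, …, C_{n-1}`,
corner block `z⁻¹ C_0` in block position `(1, n)` and corner block `z B_n` in block
position `(n, 1)`.  Block row/column indices are `0`-based (`i : Fin n` codes the
paper's index `i+1`). -/
noncomputable def cornerMat (m n : ℕ) (z : ℂ) (A B C : ℕ → Matrix (Fin m) (Fin m) ℂ) :
    Matrix (Fin n × Fin m) (Fin n × Fin m) ℂ :=
  fun p q =>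
    (if (p.1 : ℕ) = q.1 then A (p.1 + 1) p.2 q.2 else 0) +
    (if (q.1 : ℕ) = p.1 + 1 then B (p.1 + 1) p.2 q.2 else 0) +
    (if (p.1 : ℕ) = q.1 + 1 then C p.1 p.2 q.2 else 0) +
    (if (p.1 : ℕ) = 0 ∧ (q.1 : ℕ) = n - 1 then z⁻¹ * C 0 p.2 q.2 else 0) +
    (if (p.1 : ℕ) = n - 1 ∧ (q.1 : ℕ) = 0 then z * B n p.2 q.2 else 0)

set_option linter.unusedSectionVars false
set_option linter.unusedTactic false
set_option linter.unreachableTactic false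
set_option maxHeartbeats 4000000

open Kronecker

namespace CornerAux

variable {κ : Type*} [Fintype κ] [DecidableEq κ]

/-- block matrix from an `ℕ`-indexed block function. -/
def blk (k : ℕ) (f : ℕ → ℕ → Matrix κ κ ℂ) : Matrix (Fin k × κ) (Fin k × κ) ℂ :=
  fun p q => f p.1 q.1 p.2 q.2

lemma ite_apply' (c : Prop) [Decidable c] {α β : Type*} (M N : Matrix α β ℂ) (a : α) (b : β) :
    (if c then M else N) a b = if c then M a b else N a b := by split_ifs <;> rfl

lemma blk_ext' {k : ℕ} {f g : ℕ → ℕ → Matrix κ κ ℂ}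
    (h : ∀ i < k, ∀ j < k, f i j = g i j) : blk k f = blk k g := by
  ext ⟨i, x⟩ ⟨j, y⟩
  simp only [blk]
  rw [h i i.isLt j j.isLt]

lemma blk_mul' (k : ℕ) (f g : ℕ → ℕ → Matrix κ κ ℂ) :
    blk k f * blk k g = blk k (fun i j => ∑ l ∈ Finset.range k, f i l * g l j) := by
  ext ⟨i, x⟩ ⟨j, y⟩
  simp only [blk, Matrix.mul_apply]
  rw [show (∑ l ∈ Finset.range k, f i l * g l j) = ∑ l : Fin k, f i l * g l j from
    (Fin.sum_univ_eq_sum_range (fun l => f i l * g l j) k).symm]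
  rw [Matrix.sum_apply, Fintype.sum_prod_type]
  refine Finset.sum_congr rfl fun l _ => ?_
  rw [Matrix.mul_apply]

lemma blk_add' (k : ℕ) (f g : ℕ → ℕ → Matrix κ κ ℂ) :
    blk k f + blk k g = blk k (fun i j => f i j + g i j) := rfl

/-- splitting off the last block row/column -/
def esplit (κ : Type*) (k : ℕ) : (Fin k × κ) ⊕ κ ≃ Fin (k + 1) × κ where
  toFun x := match x with
    | .inl (i, a) => (i.castSucc, a)
    | .inr a => (Fin.last k, a)
  invFun p := if h : (p.1 : ℕ) < k then .inl (⟨p.1, h⟩, p.2) else .inr p.2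
  left_inv := by
    rintro (⟨i, a⟩ | a)
    · simp [Fin.castSucc, i.isLt]
    · simp
  right_inv := by
    rintro ⟨j, a⟩
    dsimp only
    split_ifs with h
    · exact Prod.ext (Fin.ext rfl) rfl
    · show (Fin.last k, a) = (j, a)
      exact Prod.ext (Fin.ext (by have := j.isLt; simp only [Fin.val_last]; omega)) rfl

lemma det_blk_one (f : ℕ → ℕ → Matrix κ κ ℂ) : (blk 1 f).det = (f 0 0).det := by
  let e : κ ≃ Fin 1 × κ :=
    ⟨fun a => ((0 : Fin 1), a), fun p => p.2, fun a => rfl,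
      fun p => by ext : 1 <;> simp [Subsingleton.elim (0 : Fin 1) p.1]⟩
  rw [← Matrix.det_submatrix_equiv_self e (blk 1 f)]
  congr 1

lemma det_blk_succ_of (k : ℕ) (f : ℕ → ℕ → Matrix κ κ ℂ) (hD : f k k = 1) :
    (blk (k + 1) f).det = (blk k (fun i j => f i j - f i k * f k j)).det := by
  rw [← Matrix.det_submatrix_equiv_self (esplit κ k) (blk (k + 1) f)]
  have h1 : (blk (k + 1) f).submatrix (esplit κ k) (esplit κ k) =
      fromBlocks (blk k f) (fun p y => f p.1 k p.2 y) (fun x q => f k q.1 x q.2) (f k k) := by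
    ext p q
    rcases p with ⟨i, x⟩ | x <;> rcases q with ⟨j, y⟩ | y <;> rfl
  rw [h1, hD]
  refine (det_fromBlocks_one₂₂ _ _ _).trans ?_
  congr 1

/-- companion blocks -/
noncomputable def Kb (z : ℂ) (k : ℕ) (F : ℕ → Matrix κ κ ℂ) (G : Matrix κ κ ℂ) :
    ℕ → ℕ → Matrix κ κ ℂ := fun i j =>
  (if i = j then 1 else 0) - (if i = j + 1 then F i else 0) -
    z⁻¹ • (if i = 0 ∧ j = k - 1 then G else 0)

noncomputable def Rprod (F : ℕ → Matrix κ κ ℂ) : ℕ → Matrix κ κ ℂ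
  | 0 => 1
  | k + 1 => F (k + 1) * Rprod F k

lemma det_Kmat (z : ℂ) (F : ℕ → Matrix κ κ ℂ) : ∀ (k : ℕ) (G : Matrix κ κ ℂ),
    (blk (k + 1) (Kb z (k + 1) F G)).det =
      ((1 : Matrix κ κ ℂ) - z⁻¹ • (G * Rprod F k)).det := by
  intro k
  induction k with
  | zero =>
      intro G
      rw [det_blk_one]
      simp [Kb, Rprod]
  | succ k ih =>
      intro G
      rw [det_blk_succ_of (k + 1) _ (by
        unfold Kb
        rw [if_pos rfl, if_neg (show ¬(k + 1 = k + 1 + 1) by omega),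
          if_neg (show ¬(k + 1 = 0 ∧ k + 1 = k + 2 - 1) by omega)]
        simp)]
      have hrw : blk (k + 1) (fun i j => Kb z (k + 2) F G i j -
          Kb z (k + 2) F G i (k + 1) * Kb z (k + 2) F G (k + 1) j) =
          blk (k + 1) (Kb z (k + 1) F (G * F (k + 1))) := by
        apply blk_ext'
        intro i hi j hj
        have e1 : Kb z (k + 2) F G i (k + 1) = -(z⁻¹ • (if i = 0 then G else 0)) := by
          unfold Kb
          rw [if_neg (show ¬(i = k + 1) by omega), if_neg (show ¬(i = k + 1 + 1) by omega),
            if_congr (show (i = 0 ∧ k + 1 = k + 2 - 1) ↔ i = 0 by omega) rfl rfl]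
          simp
        have e2 : Kb z (k + 2) F G (k + 1) j = -(if j = k then F (k + 1) else 0) := by
          unfold Kb
          rw [if_neg (show ¬(k + 1 = j) by omega),
            if_congr (show (k + 1 = j + 1) ↔ j = k by omega) rfl rfl,
            if_neg (show ¬(k + 1 = 0 ∧ j = k + 2 - 1) by omega)]
          simp
        have e3 : Kb z (k + 2) F G i (k + 1) * Kb z (k + 2) F G (k + 1) j =
            z⁻¹ • (if i = 0 ∧ j = k then G * F (k + 1) else 0) := by
          rw [e1, e2, neg_mul_neg, smul_mul_assoc, ite_mul, zero_mul, mul_ite, mul_zero,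
            ite_and]
        rw [e3]
        unfold Kb
        rw [if_neg (show ¬(i = 0 ∧ j = k + 2 - 1) by omega),
          smul_zero, sub_zero,
          if_congr (show (i = 0 ∧ j = k + 1 - 1) ↔ (i = 0 ∧ j = k) by omega) rfl rfl]
      rw [hrw, ih (G * F (k + 1))]
      rw [show Rprod F (k + 1) = F (k + 1) * Rprod F k from rfl, ← mul_assoc]

section Specific

variable (m : ℕ) (A B C : ℕ → Matrix (Fin m) (Fin m) ℂ) (z : ℂ)

noncomputable def Em (j : ℕ) : Matrix (Fin m ⊕ Fin m) (Fin m ⊕ Fin m) ℂ :=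
  fromBlocks (-(B j)⁻¹ * A j) (-(B j)⁻¹ * C (j - 1)) 1 0

noncomputable def Et (j : ℕ) : Matrix (Fin m ⊕ Fin m) (Fin m ⊕ Fin m) ℂ :=
  fromBlocks (-(A j)) (-(C (j - 1))) 1 0

noncomputable def Dbk (j : ℕ) : Matrix (Fin m ⊕ Fin m) (Fin m ⊕ Fin m) ℂ :=
  fromBlocks (B j) 0 0 1

lemma DE_mul (j : ℕ) (hj : IsUnit (B j)) :
    Dbk m B j * Em m A B C j = Et m A C j := by
  have hBinv : B j * (B j)⁻¹ = 1 :=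
    Matrix.mul_nonsing_inv _ ((Matrix.isUnit_iff_isUnit_det _).mp hj)
  unfold Dbk Em Et
  rw [fromBlocks_multiply]
  simp [Matrix.mul_neg, Matrix.neg_mul, ← Matrix.mul_assoc, hBinv]

lemma transfer_eq : ∀ k : ℕ,
    transfer m A B C (k + 1) = Rprod (fun i => Em m A B C (i + 1)) k * Em m A B C 1 := by
  intro k
  induction k with
  | zero =>
      show transfer m A B C 1 = 1 * Em m A B C 1
      rw [one_mul]
      show Em m A B C 1 * transfer m A B C 0 = Em m A B C 1
      show Em m A B C 1 * 1 = Em m A B C 1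
      rw [mul_one]
  | succ k ih =>
      have h : transfer m A B C (k + 1 + 1) =
          Em m A B C (k + 2) * transfer m A B C (k + 1) := rfl
      rw [h, ih, ← mul_assoc]
      rfl

noncomputable def Ktb (n : ℕ) : ℕ → ℕ → Matrix (Fin m ⊕ Fin m) (Fin m ⊕ Fin m) ℂ :=
  fun i j =>
    (if i = j then Dbk m B (i + 1) else 0) - (if i = j + 1 then Et m A C (i + 1) else 0) -
      z⁻¹ • (if i = 0 ∧ j = n - 1 then Et m A C 1 else 0)

noncomputable def dgb : ℕ → ℕ → Matrix (Fin m ⊕ Fin m) (Fin m ⊕ Fin m) ℂ :=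
  fun i j => if i = j then Dbk m B (i + 1) else 0

lemma Bfull_mul_K (n : ℕ) (hn : 1 ≤ n) (hB : ∀ i, 1 ≤ i → i ≤ n → IsUnit (B i)) :
    blk n (dgb m B) *
        blk n (Kb z n (fun i => Em m A B C (i + 1)) (Em m A B C 1)) =
      blk n (Ktb m A B C z n) := by
  rw [blk_mul']
  apply blk_ext'
  intro i hi j hj
  rw [Finset.sum_congr rfl (fun l _ => by rw [dgb, ite_mul, zero_mul]),
    Finset.sum_ite_eq (Finset.range n) i
      (fun l => Dbk m B (i + 1) * Kb z n (fun i => Em m A B C (i + 1)) (Em m A B C 1) l j),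
    if_pos (Finset.mem_range.mpr hi)]
  unfold Kb Ktb
  rw [mul_sub, mul_sub, mul_smul_comm, mul_ite, mul_one, mul_zero, mul_ite, mul_zero,
    mul_ite, mul_zero]
  have h2 : (if i = j + 1 then Dbk m B (i + 1) * Em m A B C (i + 1) else 0) =
      (if i = j + 1 then Et m A C (i + 1) else 0) := by
    rw [DE_mul m A B C (i + 1) (hB (i + 1) (by omega) (by omega))]
  have h3 : (if i = 0 ∧ j = n - 1 then Dbk m B (i + 1) * Em m A B C 1 else 0) =
      (if i = 0 ∧ j = n - 1 then Et m A C 1 else 0) := by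
    split_ifs with h
    · obtain ⟨h0, -⟩ := h
      subst h0
      exact DE_mul m A B C 1 (hB 1 le_rfl hn)
    · rfl
  rw [h2, h3]

lemma det_dgb (n : ℕ) :
    (blk n (dgb m B)).det = ∏ i ∈ Finset.range n, (B (i + 1)).det := by
  have h : blk n (dgb m B) =
      (blockDiagonal (fun i : Fin n => Dbk m B ((i : ℕ) + 1))).submatrix
        (Equiv.prodComm (Fin n) (Fin m ⊕ Fin m)) (Equiv.prodComm (Fin n) (Fin m ⊕ Fin m)) := by
    ext ⟨i, x⟩ ⟨j, y⟩
    simp only [blk, dgb, submatrix_apply, Equiv.prodComm_apply, Prod.swap_prod_mk,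
      blockDiagonal_apply]
    by_cases hij : i = j
    · subst hij; simp
    · have hv : ¬((i : ℕ) = (j : ℕ)) := fun hc => hij (Fin.val_inj.mp hc)
      simp [hij, hv]
  rw [h, det_submatrix_equiv_self, det_blockDiagonal]
  simp only [Dbk, det_fromBlocks_zero₂₁, det_one, mul_one]
  exact Fin.prod_univ_eq_prod_range (fun i => (B (i + 1)).det) n

def eab (m n : ℕ) : (Fin n × Fin m) ⊕ (Fin n × Fin m) ≃ Fin n × (Fin m ⊕ Fin m) where
  toFun x := match x with
    | .inl (i, a) => (i, .inl a)
    | .inr (i, a) => (i, .inr a)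
  invFun p := match p with
    | (i, .inl a) => .inl (i, a)
    | (i, .inr a) => .inr (i, a)
  left_inv := by rintro (⟨i, a⟩ | ⟨i, a⟩) <;> rfl
  right_inv := by rintro ⟨i, a | a⟩ <;> rfl

noncomputable def paa (n : ℕ) : ℕ → ℕ → Matrix (Fin m) (Fin m) ℂ := fun i j =>
  (if i = j then B (i + 1) else 0) + (if i = j + 1 then A (i + 1) else 0) +
    z⁻¹ • (if i = 0 ∧ j = n - 1 then A 1 else 0)

noncomputable def pab (n : ℕ) : ℕ → ℕ → Matrix (Fin m) (Fin m) ℂ := fun i j =>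
  (if i = j + 1 then C i else 0) + z⁻¹ • (if i = 0 ∧ j = n - 1 then C 0 else 0)

noncomputable def wb (n : ℕ) : ℕ → ℕ → Matrix (Fin m) (Fin m) ℂ := fun i j =>
  (if i = j + 1 then (1 : Matrix (Fin m) (Fin m) ℂ) else 0) +
    z⁻¹ • (if i = 0 ∧ j = n - 1 then (1 : Matrix (Fin m) (Fin m) ℂ) else 0)

noncomputable def cmb (n : ℕ) : ℕ → ℕ → Matrix (Fin m) (Fin m) ℂ := fun i j =>
  (if i = j then A (i + 1) else 0) + (if j = i + 1 then B (i + 1) else 0) +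
    (if i = j + 1 then C i else 0) + (if i = 0 ∧ j = n - 1 then z⁻¹ • C 0 else 0) +
    (if i = n - 1 ∧ j = 0 then z • B (i + 1) else 0)

lemma split_Ktb (n : ℕ) :
    (blk n (Ktb m A B C z n)).submatrix (eab m n) (eab m n) =
      fromBlocks (blk n (paa m A B z n)) (blk n (pab m C z n))
        (-(blk n (wb m z n))) 1 := by
  ext p q
  rcases p with ⟨i, x⟩ | ⟨i, x⟩ <;> rcases q with ⟨j, y⟩ | ⟨j, y⟩ <;>
    simp only [submatrix_apply, eab, Equiv.coe_fn_mk, blk, Ktb, paa, pab, wb, Dbk, Et,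
      Matrix.sub_apply, Matrix.add_apply, Matrix.smul_apply, Matrix.neg_apply, ite_apply',
      Matrix.zero_apply, fromBlocks_apply₁₁, fromBlocks_apply₁₂, fromBlocks_apply₂₁,
      fromBlocks_apply₂₂, Matrix.one_apply, smul_eq_mul, Prod.mk.injEq, Fin.ext_iff,
      ite_and, Nat.add_sub_cancel, Nat.add_sub_cancel_left] <;>
    split_ifs <;>
    first
      | rfl
      | ring
      | (exfalso; omega)

lemma cornerMat_eq (n : ℕ) : cornerMat m n z A B C = blk n (cmb m A B C z n) := by
  ext ⟨p, x⟩ ⟨q, y⟩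
  simp only [cornerMat, blk, cmb, Matrix.add_apply, ite_apply', Matrix.zero_apply,
    Matrix.smul_apply, smul_eq_mul]
  congr 1
  split_ifs with h
  · obtain ⟨h1, -⟩ := h
    rw [show (p : ℕ) + 1 = n from by have := p.isLt; omega]
  · rfl

lemma sum_mul_wb (n : ℕ) (hn : 1 ≤ n) (X : ℕ → Matrix (Fin m) (Fin m) ℂ) (j : ℕ) :
    ∑ l ∈ Finset.range n, X l * wb m z n l j =
      (if j + 1 < n then X (j + 1) else 0) + (if j = n - 1 then z⁻¹ • X 0 else 0) := by
  unfold wb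
  have key : ∀ l, X l * ((if l = j + 1 then (1 : Matrix (Fin m) (Fin m) ℂ) else 0) +
      z⁻¹ • (if l = 0 ∧ j = n - 1 then (1 : Matrix (Fin m) (Fin m) ℂ) else 0)) =
      (if l = j + 1 then X l else 0) +
        (if l = 0 then (if j = n - 1 then z⁻¹ • X l else 0) else 0) := by
    intro l
    rw [mul_add, mul_ite, mul_one, mul_zero, mul_smul_comm, mul_ite, mul_one, mul_zero,
      ite_and]
    congr 1
    split_ifs <;> simp
  rw [Finset.sum_congr rfl fun l _ => key l, Finset.sum_add_distrib,
    Finset.sum_ite_eq' (Finset.range n) (j + 1) X,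
    Finset.sum_ite_eq' (Finset.range n) 0
      (fun l => if j = n - 1 then z⁻¹ • X l else 0),
    if_pos (Finset.mem_range.mpr (show 0 < n by omega))]
  simp only [Finset.mem_range]

lemma central (n : ℕ) (hn : 1 ≤ n) (hz : z ≠ 0) :
    blk n (cmb m A B C z n) * blk n (wb m z n) =
      blk n (paa m A B z n) + blk n (pab m C z n) * blk n (wb m z n) := by
  rw [blk_mul', blk_mul', blk_add']
  apply blk_ext'
  intro i hi j hj
  rw [sum_mul_wb m z n hn (fun l => cmb m A B C z n i l) j,
    sum_mul_wb m z n hn (fun l => pab m C z n i l) j]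
  unfold cmb paa pab
  ext x y
  simp only [Matrix.add_apply, Matrix.smul_apply, Matrix.zero_apply, ite_apply',
    smul_eq_mul]
  split_ifs <;>
    first
      | (exfalso; omega)
      | (subst_vars; first
          | ring1
          | (exfalso; tauto)
          | (field_simp; ring1)
          | (field_simp; done))

noncomputable def csc (n : ℕ) : Matrix (Fin n) (Fin n) ℂ := fun i j =>
  (if (i : ℕ) = (j : ℕ) + 1 then 1 else 0) +
    (if (i : ℕ) = 0 ∧ (j : ℕ) = n - 1 then z⁻¹ else 0)

lemma blkwb_eq (n : ℕ) :
    blk n (wb m z n) = (csc z n) ⊗ₖ (1 : Matrix (Fin m) (Fin m) ℂ) := by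
  ext ⟨i, x⟩ ⟨j, y⟩
  simp only [blk, wb, csc, kroneckerMap_apply, Matrix.add_apply, ite_apply',
    Matrix.smul_apply, Matrix.zero_apply, Matrix.one_apply, smul_eq_mul]
  split_ifs <;> ring

lemma det_csc (N : ℕ) : (csc z (N + 1)).det = (-1 : ℂ) ^ N * z⁻¹ := by
  have h : csc z (N + 1) = (Equiv.Perm.permMatrix ℂ ((finRotate (N + 1))⁻¹)) *
      Matrix.diagonal (fun j : Fin (N + 1) => if j = Fin.last N then z⁻¹ else 1) := by
    ext i j
    rw [Matrix.mul_diagonal]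
    simp only [csc, Equiv.Perm.permMatrix, PEquiv.toMatrix_apply, Equiv.toPEquiv_apply,
      Option.mem_def, Option.some.injEq]
    have hA : ((finRotate (N + 1))⁻¹ i = j) ↔ (i = j + 1) := by
      rw [Equiv.Perm.inv_def, Equiv.symm_apply_eq, finRotate_succ_apply]
    by_cases hj : (j : ℕ) = N
    · have hjl : j = Fin.last N := Fin.ext (by simp [hj])
      subst hjl
      rw [if_neg (show ¬ ((i : ℕ) = (Fin.last N : ℕ) + 1) by
          have := i.isLt; simp only [Fin.val_last]; omega),
        if_congr (hA.trans (show (i = Fin.last N + 1) ↔ (i = 0) by rw [Fin.last_add_one]))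
          rfl rfl,
        if_congr (show ((i : ℕ) = 0 ∧ (Fin.last N : ℕ) = N + 1 - 1) ↔ (i = 0) by
          rw [Fin.ext_iff, Fin.val_zero, Fin.val_last]; omega) rfl rfl,
        if_pos rfl]
      split_ifs <;> ring
    · have hjl : ¬ (j = Fin.last N) := fun hc => hj (by rw [hc, Fin.val_last])
      have hlt : j < Fin.last N := lt_of_le_of_ne (Fin.le_last j) hjl
      have hv : ((j + 1 : Fin (N + 1)) : ℕ) = (j : ℕ) + 1 := Fin.val_add_one_of_lt hlt
      rw [if_neg hjl, if_congr (hA.trans (show (i = j + 1) ↔ ((i : ℕ) = (j : ℕ) + 1) by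
        rw [Fin.ext_iff, hv])) rfl rfl]
      rw [if_neg (show ¬((i : ℕ) = 0 ∧ (j : ℕ) = N + 1 - 1) from
        fun hc => hj (by have := hc.2; omega))]
      split_ifs <;> ring
  rw [h, det_mul, det_permutation, det_diagonal, Equiv.Perm.sign_inv, sign_finRotate,
    Finset.prod_ite_eq' Finset.univ (Fin.last N) (fun _ => z⁻¹),
    if_pos (Finset.mem_univ _)]
  push_cast
  ring

lemma detW (N : ℕ) : (blk (N + 1) (wb m z (N + 1))).det = ((-1 : ℂ) ^ N * z⁻¹) ^ m := by
  rw [blkwb_eq, det_kronecker, det_csc, det_one, one_pow, mul_one]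
  simp

lemma det_list_prod_range : ∀ k : ℕ,
    (((List.range k).map (fun j => B (j + 1))).prod).det =
      ∏ i ∈ Finset.range k, (B (i + 1)).det := by
  intro k
  induction k with
  | zero => simp
  | succ k ih =>
      rw [List.range_succ, List.map_append, List.prod_append, List.map_singleton,
        List.prod_singleton, det_mul, ih, Finset.prod_range_succ]

end Specific
end CornerAux

/-- Lemma 1: `det M(z) = ((-1)^{nm} / (-z)^m) · det (T - z I_{2m}) · det (B_1 ⋯ B_n)`. -/
theorem det_cornerMat (m n : ℕ) (hm : 1 ≤ m) (hn : 1 ≤ n)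
    (A B C : ℕ → Matrix (Fin m) (Fin m) ℂ)
    (hB : ∀ i, 1 ≤ i → i ≤ n → IsUnit (B i))
    (hC : ∀ i, i < n → IsUnit (C i))
    (z : ℂ) (hz : z ≠ 0) :
    (cornerMat m n z A B C).det =
      ((-1 : ℂ) ^ (n * m) / (-z) ^ m) *
        (transfer m A B C n - z • (1 : Matrix (Fin m ⊕ Fin m) (Fin m ⊕ Fin m) ℂ)).det *
        (((List.range n).map (fun k => B (k + 1))).prod).det := by
  obtain ⟨N, rfl⟩ : ∃ N, n = N + 1 := ⟨n - 1, by omega⟩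
  classical
  -- determinant of the companion matrix
  have hK : (CornerAux.blk (N + 1) (CornerAux.Kb z (N + 1)
      (fun i => CornerAux.Em m A B C (i + 1)) (CornerAux.Em m A B C 1))).det
      = (-z⁻¹ : ℂ) ^ (m + m) * (transfer m A B C (N + 1) -
          z • (1 : Matrix (Fin m ⊕ Fin m) (Fin m ⊕ Fin m) ℂ)).det := by
    rw [CornerAux.det_Kmat]
    have h1 : (1 : Matrix (Fin m ⊕ Fin m) (Fin m ⊕ Fin m) ℂ) -
        z⁻¹ • (CornerAux.Em m A B C 1 *
          CornerAux.Rprod (fun i => CornerAux.Em m A B C (i + 1)) N) =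
        1 + CornerAux.Em m A B C 1 *
          ((-z⁻¹) • CornerAux.Rprod (fun i => CornerAux.Em m A B C (i + 1)) N) := by
      rw [mul_smul_comm, neg_smul, ← sub_eq_add_neg]
    rw [h1, Matrix.det_one_add_mul_comm]
    have h2 : (1 : Matrix (Fin m ⊕ Fin m) (Fin m ⊕ Fin m) ℂ) +
        ((-z⁻¹) • CornerAux.Rprod (fun i => CornerAux.Em m A B C (i + 1)) N) *
          CornerAux.Em m A B C 1 =
        (-z⁻¹) • (transfer m A B C (N + 1) -
          z • (1 : Matrix (Fin m ⊕ Fin m) (Fin m ⊕ Fin m) ℂ)) := by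
      rw [smul_mul_assoc, ← CornerAux.transfer_eq m A B C N, smul_sub, smul_smul,
        show -z⁻¹ * z = -1 by field_simp]
      module
    rw [h2, Matrix.det_smul,
      show Fintype.card (Fin m ⊕ Fin m) = m + m by simp]
  -- the factorization and a/b split
  have hsplit : (CornerAux.blk (N + 1) (CornerAux.Ktb m A B C z (N + 1))).det =
      (cornerMat m (N + 1) z A B C).det *
        (CornerAux.blk (N + 1) (CornerAux.wb m z (N + 1))).det := by
    rw [← Matrix.det_submatrix_equiv_self (CornerAux.eab m (N + 1)),
      CornerAux.split_Ktb, Matrix.det_fromBlocks_one₂₂, Matrix.mul_neg, sub_neg_eq_add,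
      ← CornerAux.central m A B C z (N + 1) hn hz, Matrix.det_mul,
      CornerAux.cornerMat_eq]
  have hchain : (cornerMat m (N + 1) z A B C).det * ((-1 : ℂ) ^ N * z⁻¹) ^ m =
      (∏ i ∈ Finset.range (N + 1), (B (i + 1)).det) *
        ((-z⁻¹ : ℂ) ^ (m + m) * (transfer m A B C (N + 1) -
          z • (1 : Matrix (Fin m ⊕ Fin m) (Fin m ⊕ Fin m) ℂ)).det) := by
    rw [← CornerAux.detW m z N, ← hsplit, ← CornerAux.Bfull_mul_K m A B C z (N + 1) hn hB,
      Matrix.det_mul, CornerAux.det_dgb, hK]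
  rw [CornerAux.det_list_prod_range m B (N + 1)]
  have hWne : ((-1 : ℂ) ^ N * z⁻¹) ^ m ≠ 0 :=
    pow_ne_zero _ (mul_ne_zero (pow_ne_zero _ (by norm_num)) (inv_ne_zero hz))
  apply mul_right_cancel₀ hWne
  rw [hchain]
  have halg : ∀ T P : ℂ,
      ((-1 : ℂ) ^ ((N + 1) * m) / (-z) ^ m * T * P) * ((-1 : ℂ) ^ N * z⁻¹) ^ m =
        P * ((-z⁻¹ : ℂ) ^ (m + m) * T) := by
    intro T P
    have hu : (-1 : ℂ) ^ (N * m) * (-1 : ℂ) ^ (N * m) = 1 := by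
      rw [← pow_add]; exact Even.neg_one_pow ⟨N * m, rfl⟩
    have hv : (-1 : ℂ) ^ m * (-1 : ℂ) ^ m = 1 := by
      rw [← pow_add]; exact Even.neg_one_pow ⟨m, rfl⟩
    have hzm : (z : ℂ) ^ m ≠ 0 := pow_ne_zero _ hz
    rw [mul_pow, ← pow_mul, pow_add ((-z⁻¹ : ℂ)), neg_pow z⁻¹, neg_pow z, add_mul, one_mul,
      pow_add ((-1 : ℂ)) (N * m), inv_pow]
    field_simp
    ring_nf
    have e1 : (-1 : ℂ) ^ (N * m * 2) = 1 := by rw [pow_mul, sq, hu]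
    have e2 : (-1 : ℂ) ^ (m * 3) = (-1) ^ m := by
      rw [show m * 3 = m * 2 + m by ring, pow_add, pow_mul, sq, hv, one_mul]
    have e3 : (-1 : ℂ) ^ (m * 2) = 1 := by rw [pow_mul, sq, hv]
    simp only [e1, e2, e3, mul_one]
  exact (halg _ _).symm
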